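/- Let B be a category, let A and B be objects of B, and let ε : A → B and μ : B → A be morphisms with μ ∘ ε = id_A; put ρ = ε ∘ μ. Consider the functor from the poset ℕ (viewed as a category) to B whose value at every n is B and whose transition morphism from n to n+1 is ρ for every n. Then the cocone on this functor with apex A all of whose components equal μ : B → A is a colimit cocone; that is, A is the colimit of the sequence B →ρ B →ρ B → ⋯ with constant limiting morphism μ. -/

import Mathlib

open CategoryTheory CategoryTheory.Limits

universe v u

/-- Let `ε : A ⟶ X`, `μ : X ⟶ A` with `μ ∘ ε = id_A`, and put
`ρ = ε ∘ μ : X ⟶ X`.  Then the cocone with apex `A` and all components equal to `μ`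
over the sequence `X ⟶ρ X ⟶ρ X ⟶ ⋯` (indexed by the poset `ℕ`) is a colimit cocone. -/
theorem retract_isColimit_of_idempotent_sequence {B : Type u} [Category.{v} B]
    (A X : B) (ε : A ⟶ X) (μ : X ⟶ A) (h : ε ≫ μ = 𝟙 A) :
    Nonempty (IsColimit
      ({ pt := A
         ι :=
          { app := fun _ : ℕ => μ
            naturality := by
              have key : ∀ (m n : ℕ) (hmn : m ≤ n),
                  (Functor.ofSequence fun _ : ℕ => (μ ≫ ε : X ⟶ X)).map
                    (homOfLE hmn) ≫ μ = μ := by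
                intro m n hmn
                induction hmn with
                | refl => simp; exact Category.id_comp μ
                | @step k hk ih =>
                    rw [show (homOfLE (Nat.le_succ_of_le hk) : (m : ℕ) ⟶ (k + 1 : ℕ)) =
                          homOfLE hk ≫ homOfLE (Nat.le_succ k) from Subsingleton.elim _ _,
                        Functor.map_comp]
                    erw [Category.assoc, Functor.ofSequence_map_homOfLE_succ]
                    erw [Category.assoc, h, Category.comp_id, ih]
              intro m n g
              have hg : g = homOfLE (leOfHom g) := Subsingleton.elim _ _
              simp only [Functor.const_obj_obj, Functor.const_obj_map, Category.comp_id]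
              rw [hg, key]
              exact (Category.comp_id _).symm } } :
        Cocone (Functor.ofSequence fun _ : ℕ => (μ ≫ ε : X ⟶ X)))) := by
  set F := Functor.ofSequence fun _ : ℕ => (μ ≫ ε : X ⟶ X) with hF
  have hnat : ∀ (s : Cocone F) (n : ℕ), (μ ≫ ε) ≫ s.ι.app (n + 1) = s.ι.app n := by
    intro s n
    have := s.ι.naturality (homOfLE (Nat.le_succ n))
    rw [Functor.ofSequence_map_homOfLE_succ] at this
    simp at this; exact this
  have hconst : ∀ (s : Cocone F) (n : ℕ), ε ≫ s.ι.app n = ε ≫ s.ι.app 0 := by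
    intro s n
    induction n with
    | zero => rfl
    | succ k ih =>
        rw [← ih, ← hnat s k]; erw [← Category.assoc, ← Category.assoc, h, Category.id_comp]
  exact ⟨{
    desc := fun s => ε ≫ s.ι.app 0
    fac := fun s n => by
      dsimp only
      rw [← hconst s (n + 1)]; erw [← Category.assoc, hnat s n]
    uniq := fun s m hm => by
      have h0 := hm 0
      dsimp only at h0 ⊢
      rw [← h0]; erw [← Category.assoc, h, Category.id_comp] }⟩
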